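/- For the Contois function μ_C(s,x) = μ_max·s/(K_s·x + s) with μ_max, K_s > 0: (i) for each fixed s > 0, x ↦ μ_C(s,x) is decreasing; (ii) for each fixed s > 0, x ↦ μ_C(s,x)·x is increasing; (iii) μ_C(s,x) = μ_M(s/x) where μ_M(r) = μ_max·r/(K_s + r), and for each z₁ > 0 the map s ↦ μ_M(s/((s_in - s)z₁))·(s_in - s) is strictly concave on (0, s_in). -/

import Mathlib

open Set Filter Topology

theorem stmt19 (μmax Ks s_in : ℝ) (hμ : 0 < μmax) (hK : 0 < Ks)
    (hsin : 0 < s_in) (μC : ℝ → ℝ → ℝ) (μM : ℝ → ℝ)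
    (hC : ∀ s x, μC s x = μmax * s / (Ks * x + s))
    (hMdef : ∀ r, μM r = μmax * r / (Ks + r)) :
    (∀ s > (0:ℝ), StrictAntiOn (fun x => μC s x) (Ici 0)) ∧
    (∀ s > (0:ℝ), StrictMonoOn (fun x => μC s x * x) (Ici 0)) ∧
    (∀ s > (0:ℝ), ∀ x > (0:ℝ), μC s x = μM (s / x)) ∧
    (∀ z₁ > (0:ℝ), StrictConcaveOn ℝ (Ioo 0 s_in)
      (fun s => μM (s / ((s_in - s) * z₁)) * (s_in - s))) := by
  refine ⟨?_, ?_, ?_, ?_⟩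
  · intro s hs x hx y hy hxy
    have hx' : (0:ℝ) ≤ x := hx
    have hy' : (0:ℝ) ≤ y := hy
    simp only [hC]
    have d1 : 0 < Ks * x + s := by positivity
    have d2 : 0 < Ks * y + s := by nlinarith
    apply div_lt_div_of_pos_left (by positivity) d1
    nlinarith
  · intro s hs x hx y hy hxy
    have hx' : (0:ℝ) ≤ x := hx
    have hy' : (0:ℝ) ≤ y := hy
    simp only [hC]
    have d1 : 0 < Ks * x + s := by positivity
    have d2 : 0 < Ks * y + s := by nlinarith
    rw [div_mul_eq_mul_div, div_mul_eq_mul_div, div_lt_div_iff₀ d1 d2]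
    nlinarith [mul_pos (mul_pos hμ hs) hs]
  · intro s hs x hx
    rw [hC, hMdef]
    have : Ks * x + s ≠ 0 := by positivity
    field_simp
  · intro z₁ hz₁
    have hE : ∀ s ∈ Ioo (0:ℝ) s_in, 0 < Ks * z₁ * (s_in - s) + s := by
      intro s hs
      have h1 : 0 < s_in - s := by linarith [hs.2]
      have := hs.1
      positivity
    have hfeq : ∀ s ∈ Ioo (0:ℝ) s_in,
        μM (s / ((s_in - s) * z₁)) * (s_in - s)
          = μmax * (s * (s_in - s)) / (Ks * z₁ * (s_in - s) + s) := by
      intro s hs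
      have h1 : (0:ℝ) < s_in - s := by linarith [hs.2]
      have h2 : (0:ℝ) < (s_in - s) * z₁ := by positivity
      have h3 : (0:ℝ) < Ks * z₁ * (s_in - s) + s := hE s hs
      have hden : (0:ℝ) < Ks + s / ((s_in - s) * z₁) :=
        add_pos hK (div_pos hs.1 h2)
      rw [hMdef, div_mul_eq_mul_div, div_eq_div_iff hden.ne' h3.ne']
      field_simp
    constructor
    · exact convex_Ioo 0 s_in
    · intro x hx y hy hxy a b ha hb hab
      simp only [smul_eq_mul]
      have hz : a * x + b * y ∈ Ioo (0:ℝ) s_in := (convex_Ioo 0 s_in) hx hy ha.le hb.le hab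
      rw [hfeq x hx, hfeq y hy, hfeq _ hz]
      have Ex := hE x hx
      have Ey := hE y hy
      have Ez := hE _ hz
      rw [← mul_div_assoc, ← mul_div_assoc, div_add_div _ _ Ex.ne' Ey.ne',
        div_lt_div_iff₀ (mul_pos Ex Ey) Ez]
      have hb' : b = 1 - a := by linarith
      subst hb'
      have hxy2 : 0 < (x - y) ^ 2 := by
        have := sub_ne_zero.mpr hxy
        positivity
      nlinarith [mul_pos (mul_pos (mul_pos hμ (mul_pos ha hb)) hxy2)
        (mul_pos (mul_pos hK hz₁) (pow_pos hsin 2))]
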